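/- Let (B,⌊·,·⌋) be an SSD space, f ∈ PC(B), f ≥ q on B and b,c ∈ B. Then −q(b − c) ≤ [√((f−q)(b)) + √((f−q)(c))]². -/

import Mathlib

noncomputable section

variable {B : Type*} [AddCommGroup B] [Module ℝ B]

/-- The quadratic form `q(b) = ½⌊b,b⌋` associated with a bilinear form. -/
def qForm (br : B →ₗ[ℝ] B →ₗ[ℝ] ℝ) (b : B) : ℝ := (1 / 2) * br b b

/-- The intrinsic conjugate `f^@(c) = sup_{b} (⌊b,c⌋ - f(b))`. -/
def intrinsicConj (br : B →ₗ[ℝ] B →ₗ[ℝ] ℝ) (f : B → EReal) (c : B) : EReal :=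
  ⨆ b : B, ((br b c : ℝ) : EReal) - f b

/-- A proper function from `B` into `(-∞,∞]`: never `⊥` and somewhere finite. -/
def ProperFn (f : B → EReal) : Prop := (∀ b, f b ≠ ⊥) ∧ ∃ b, f b ≠ ⊤

/-- Convexity for `(-∞,∞]`-valued functions. -/
def ConvexFn (f : B → EReal) : Prop :=
  ∀ b c : B, ∀ t : ℝ, 0 ≤ t → t ≤ 1 →
    f (t • b + (1 - t) • c) ≤ (t : EReal) * f b + ((1 - t : ℝ) : EReal) * f c

/-- `A` is q-positive: nonempty and `q(b - c) ≥ 0` for all `b, c ∈ A`. -/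
def QPos (br : B →ₗ[ℝ] B →ₗ[ℝ] ℝ) (A : Set B) : Prop :=
  A.Nonempty ∧ ∀ b ∈ A, ∀ c ∈ A, 0 ≤ qForm br (b - c)

/-- `A` is maximally q-positive. -/
def MaxQPos (br : B →ₗ[ℝ] B →ₗ[ℝ] ℝ) (A : Set B) : Prop :=
  QPos br A ∧ ∀ C : Set B, QPos br C → A ⊆ C → C = A

/-- `Φ_A(b) = sup_{a ∈ A} (⌊a,b⌋ - q(a))`. -/
def PhiA (br : B →ₗ[ℝ] B →ₗ[ℝ] ℝ) (A : Set B) (b : B) : EReal :=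
  ⨆ a : A, ((br (a : B) b - qForm br (a : B) : ℝ) : EReal)

/-- `P_q(f) = {b : f(b) = q(b)}`. -/
def Pq (br : B →ₗ[ℝ] B →ₗ[ℝ] ℝ) (f : B → EReal) : Set B :=
  {b : B | f b = ((qForm br b : ℝ) : EReal)}

/-- `N_q(g) = {b : g(b) = -q(b)}`. -/
def Nq (br : B →ₗ[ℝ] B →ₗ[ℝ] ℝ) (f : B → EReal) : Set B :=
  {b : B | f b = ((-(qForm br b) : ℝ) : EReal)}

/-- `f` is a BC-function: `f^@(b) ≥ f(b) ≥ q(b)` for all `b`. -/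
def IsBC (br : B →ₗ[ℝ] B →ₗ[ℝ] ℝ) (f : B → EReal) : Prop :=
  ∀ b : B, ((qForm br b : ℝ) : EReal) ≤ f b ∧ f b ≤ intrinsicConj br f b

/-- `g` is a TBC-function: `g^@(-b) ≥ g(b) ≥ -q(b)` for all `b`. -/
def IsTBC (br : B →ₗ[ℝ] B →ₗ[ℝ] ℝ) (g : B → EReal) : Prop :=
  ∀ b : B, ((-(qForm br b) : ℝ) : EReal) ≤ g b ∧ g b ≤ intrinsicConj br g (-b)

/-- The effective domain `dom f = {b : f(b) ∈ ℝ}`. -/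
def domE (f : B → EReal) : Set B := {b : B | ∃ r : ℝ, f b = (r : EReal)}



lemma key_aux (M beta gam : ℝ) (hb : 0 ≤ beta) (hg : 0 ≤ gam)
    (h : ∀ t : ℝ, 0 ≤ t → t ≤ 1 → M * (t * (1 - t)) ≤ t * beta + (1 - t) * gam) :
    M ≤ (Real.sqrt beta + Real.sqrt gam) ^ 2 := by
  have heps : ∀ ε : ℝ, 0 < ε → M ≤ (Real.sqrt (beta + ε) + Real.sqrt (gam + ε)) ^ 2 := by
    intro ε hε
    set s := Real.sqrt (beta + ε) with hs_def
    set u := Real.sqrt (gam + ε) with hu_def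
    have hs : 0 < s := Real.sqrt_pos.2 (by linarith)
    have hu : 0 < u := Real.sqrt_pos.2 (by linarith)
    have hs2 : s ^ 2 = beta + ε := Real.sq_sqrt (by linarith)
    have hu2 : u ^ 2 = gam + ε := Real.sq_sqrt (by linarith)
    have hsu : 0 < s + u := by linarith
    set t := u / (s + u) with ht_def
    have ht0 : 0 ≤ t := by positivity
    have ht1 : t ≤ 1 := by rw [ht_def, div_le_one hsu]; linarith
    have ht := h t ht0 ht1
    have h1 : t * (s + u) = u := by rw [ht_def]; field_simp
    have h2 : (1 - t) * (s + u) = s := by rw [ht_def]; field_simp; ring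
    -- Multiply ht by (s+u)^2 > 0
    have hmul : M * (u * s) ≤ u * beta * (s + u) + s * gam * (s + u) := by
      have := mul_le_mul_of_nonneg_right ht (le_of_lt (mul_pos hsu hsu))
      calc M * (u * s) = M * ((t * (s + u)) * ((1 - t) * (s + u))) := by rw [h1, h2]
        _ = M * (t * (1 - t)) * ((s + u) * (s + u)) := by ring
        _ ≤ (t * beta + (1 - t) * gam) * ((s + u) * (s + u)) := this
        _ = (t * (s + u)) * beta * (s + u) + ((1 - t) * (s + u)) * gam * (s + u) := by ring
        _ = u * beta * (s + u) + s * gam * (s + u) := by rw [h1, h2]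
    have hbs : beta ≤ s ^ 2 := by linarith
    have hgu : gam ≤ u ^ 2 := by linarith
    have hfin : M * (u * s) ≤ (s + u) ^ 2 * (u * s) := by nlinarith [mul_pos hs hu]
    exact le_of_mul_le_mul_right (by linarith [hfin]) (mul_pos hu hs)
  have hcont : Filter.Tendsto (fun ε : ℝ => (Real.sqrt (beta + ε) + Real.sqrt (gam + ε)) ^ 2)
      (nhdsWithin 0 (Set.Ioi 0)) (nhds ((Real.sqrt beta + Real.sqrt gam) ^ 2)) := by
    have hca : ContinuousAt (fun ε : ℝ => (Real.sqrt (beta + ε) + Real.sqrt (gam + ε)) ^ 2) 0 := by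
      fun_prop
    have h2 : Filter.Tendsto (fun ε : ℝ => (Real.sqrt (beta + ε) + Real.sqrt (gam + ε)) ^ 2)
        (nhdsWithin 0 (Set.Ioi 0)) (nhds ((Real.sqrt (beta + 0) + Real.sqrt (gam + 0)) ^ 2)) :=
      hca.continuousWithinAt
    simpa using h2
  exact ge_of_tendsto hcont
    (Filter.eventually_of_mem self_mem_nhdsWithin fun x hx => heps x hx)

/-- if `f ∈ PC(B)`, `f ≥ q` on `B` and `b, c ∈ B`, then
`-q(b-c) ≤ (√((f-q)(b)) + √((f-q)(c)))²` (the inequality being automatic unless both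
`f(b)` and `f(c)` are finite, it is stated for finite values). -/
theorem stmt6 [Nontrivial B] (br : B →ₗ[ℝ] B →ₗ[ℝ] ℝ)
    (hsymm : ∀ b c : B, br b c = br c b)
    (f : B → EReal) (hproper : ProperFn f) (hconv : ConvexFn f)
    (hfq : ∀ b : B, ((qForm br b : ℝ) : EReal) ≤ f b)
    (b c : B) (rb rc : ℝ) (hb : f b = (rb : EReal)) (hc : f c = (rc : EReal)) :
    -(qForm br (b - c)) ≤
      (Real.sqrt (rb - qForm br b) + Real.sqrt (rc - qForm br c)) ^ 2 := by
  set qb := qForm br b with hqb_def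
  set qc := qForm br c with hqc_def
  have hbeta : 0 ≤ rb - qb := by
    have := hfq b; rw [hb] at this
    have : (qb : ℝ) ≤ rb := EReal.coe_le_coe_iff.1 this
    linarith
  have hgam : 0 ≤ rc - qc := by
    have := hfq c; rw [hc] at this
    have : (qc : ℝ) ≤ rc := EReal.coe_le_coe_iff.1 this
    linarith
  apply key_aux
  · exact hbeta
  · exact hgam
  intro t ht0 ht1
  have hcv := hconv b c t ht0 ht1
  rw [hb, hc] at hcv
  have hfq' := hfq (t • b + (1 - t) • c)
  have hle : ((qForm br (t • b + (1 - t) • c) : ℝ) : EReal)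
      ≤ ((t * rb + (1 - t) * rc : ℝ) : EReal) := by
    refine le_trans hfq' (le_trans hcv ?_)
    rw [EReal.coe_add, EReal.coe_mul, EReal.coe_mul]
  have hreal : qForm br (t • b + (1 - t) • c) ≤ t * rb + (1 - t) * rc :=
    EReal.coe_le_coe_iff.1 hle
  have hexp : qForm br (t • b + (1 - t) • c)
      = t ^ 2 * qb + (1 - t) ^ 2 * qc + t * (1 - t) * (br b c) := by
    simp only [qForm, hqb_def, hqc_def, map_add, map_smul, LinearMap.add_apply,
      LinearMap.smul_apply, smul_eq_mul, hsymm c b]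
    ring
  have hqbc : qForm br (b - c) = qb + qc - br b c := by
    simp only [qForm, hqb_def, hqc_def, map_sub, LinearMap.sub_apply, hsymm c b]
    ring
  rw [hexp] at hreal
  nlinarith [hreal, hqbc]
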